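/- The center Z(D) of the group D equals the subgroup generated by x^(p^(m−l)) and y^(p^(m−l)), and |Z(D)| = p^(n−m+2l). (Note that n − m + 2l ≥ 0 since m − l ≤ n and l ≥ 1.) -/

import Mathlib

lemma aux_lte {p : ℕ} (hp : p.Prime) (hodd : Odd p) {l m : ℕ} (hl : 0 < l) (hlm : l ≤ m)
    (b : ℕ) : p ^ m ∣ (1 + p ^ l) ^ b - 1 ↔ p ^ (m - l) ∣ b := by
  haveI : Fact p.Prime := ⟨hp⟩
  rcases Nat.eq_zero_or_pos b with rfl | hb
  · simp
  have hp1 : 1 < p := hp.one_lt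
  have hpl : 1 < p ^ l := Nat.one_lt_pow hl.ne' hp1
  have hndvd : ¬ p ∣ 1 + p ^ l := by
    intro h
    rw [Nat.add_comm] at h
    have h1 : p ∣ 1 := (Nat.dvd_add_right (dvd_pow_self p hl.ne')).mp h
    have := Nat.le_of_dvd one_pos h1
    omega
  have hlte := padicValNat.pow_sub_pow (p := p) hodd (x := 1 + p ^ l) (y := 1)
    (by omega) (by simpa using dvd_pow_self p hl.ne') hndvd hb.ne'
  simp only [one_pow, Nat.add_sub_cancel_left] at hlte
  rw [padicValNat.prime_pow] at hlte
  have hN : (1 + p ^ l) ^ b - 1 ≠ 0 := by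
    have : 1 + p ^ l ≤ (1 + p ^ l) ^ b := Nat.le_self_pow hb.ne' _
    omega
  rw [padicValNat_dvd_iff_le hN, hlte, padicValNat_dvd_iff_le hb.ne']
  omega

theorem stmt_8 (p m n l : ℕ) (hp : p.Prime) (hodd : Odd p)
    (hl : 0 < l) (hlm : l < m) (hmn : m - l ≤ n)
    (D : Type*) [Group D] (x y : D)
    (hcard : Nat.card D = p ^ (m + n))
    (hx : orderOf x = p ^ m) (hy : orderOf y = p ^ n)
    (hconj : y * x * y⁻¹ = x ^ (1 + p ^ l))
    (hgen : Subgroup.closure {x, y} = ⊤) :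
    Subgroup.center D = Subgroup.closure {x ^ p ^ (m - l), y ^ p ^ (m - l)} ∧
    Nat.card (Subgroup.center D) = p ^ (n + 2 * l - m) := by
  haveI : Fact p.Prime := ⟨hp⟩
  have hp1 : 1 < p := hp.one_lt
  set c := 1 + p ^ l with hcdef
  have hc1 : 1 ≤ c := by omega
  have hpm0 : 0 < p ^ m := Nat.pow_pos (by omega)
  have hpn0 : 0 < p ^ n := Nat.pow_pos (by omega)
  have hq0 : 0 < p ^ (m - l) := Nat.pow_pos (by omega)
  have hpl0 : 0 < p ^ l := Nat.pow_pos (by omega)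
  have hxpm : x ^ p ^ m = 1 := by rw [← hx]; exact pow_orderOf_eq_one x
  have hypn : y ^ p ^ n = 1 := by rw [← hy]; exact pow_orderOf_eq_one y
  -- basic commutation relations
  have hyx1 : y * x = x ^ c * y := by
    rw [← hconj]; group
  have hyxa : ∀ a : ℕ, y * x ^ a = x ^ (a * c) * y := by
    intro a; induction a with
    | zero => simp
    | succ a ih =>
      rw [pow_succ, ← mul_assoc, ih, mul_assoc, hyx1, ← mul_assoc, ← pow_add,
        Nat.succ_mul]
  have key : ∀ b a : ℕ, y ^ b * x ^ a = x ^ (a * c ^ b) * y ^ b := by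
    intro b
    induction b with
    | zero => intro a; simp
    | succ b ih =>
      intro a
      rw [pow_succ, mul_assoc, hyxa, ← mul_assoc, ih, mul_assoc, ← pow_succ,
        show a * c * c ^ b = a * c ^ (b + 1) by ring]
  -- inverses
  have hxinv : x⁻¹ = x ^ (p ^ m - 1) := by
    apply inv_eq_of_mul_eq_one_right
    rw [← pow_succ', Nat.sub_add_cancel hpm0]
    exact hxpm
  have hyinv : y⁻¹ = y ^ (p ^ n - 1) := by
    apply inv_eq_of_mul_eq_one_right
    rw [← pow_succ', Nat.sub_add_cancel hpn0]
    exact hypn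
  -- normal form
  have hform : ∀ g : D, ∃ a b : ℕ, g = x ^ a * y ^ b := by
    set H : Subgroup D :=
      { carrier := {g | ∃ a b : ℕ, g = x ^ a * y ^ b}
        one_mem' := ⟨0, 0, by simp⟩
        mul_mem' := by
          rintro g h ⟨a, b, rfl⟩ ⟨a', b', rfl⟩
          refine ⟨a + a' * c ^ b, b + b', ?_⟩
          rw [mul_assoc, ← mul_assoc (y ^ b), key, mul_assoc, ← pow_add,
            ← mul_assoc, ← pow_add]
        inv_mem' := by
          rintro g ⟨a, b, rfl⟩
          refine ⟨(p ^ m - 1) * a * c ^ ((p ^ n - 1) * b), (p ^ n - 1) * b, ?_⟩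
          rw [mul_inv_rev, ← inv_pow, ← inv_pow, hxinv, hyinv, ← pow_mul, ← pow_mul, key] } with hH
    intro g
    have hle : (⊤ : Subgroup D) ≤ H := by
      rw [← hgen]
      refine (Subgroup.closure_le H).mpr ?_
      rintro z hz
      simp only [Set.mem_insert_iff, Set.mem_singleton_iff] at hz
      rcases hz with rfl | rfl
      · exact ⟨1, 0, by simp⟩
      · exact ⟨0, 1, by simp⟩
    exact hle (Subgroup.mem_top g)
  -- injectivity of normal form
  haveI : NeZero (p ^ m) := ⟨hpm0.ne'⟩
  haveI : NeZero (p ^ n) := ⟨hpn0.ne'⟩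
  haveI : Finite D := Nat.finite_of_card_ne_zero (by rw [hcard]; positivity)
  set f : ZMod (p ^ m) × ZMod (p ^ n) → D := fun z => x ^ z.1.val * y ^ z.2.val with hf
  have hfapp : ∀ a b : ℕ, f ((a : ZMod (p ^ m)), (b : ZMod (p ^ n))) = x ^ a * y ^ b := by
    intro a b
    have e1 : x ^ (a % p ^ m) = x ^ a := by rw [← hx]; exact pow_mod_orderOf x a
    have e2 : y ^ (b % p ^ n) = y ^ b := by rw [← hy]; exact pow_mod_orderOf y b
    simp only [hf, ZMod.val_natCast]
    rw [e1, e2]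
  have hbij : Function.Bijective f := by
    rw [Nat.bijective_iff_surjective_and_card]
    constructor
    · intro g
      obtain ⟨a, b, rfl⟩ := hform g
      exact ⟨((a : ZMod (p ^ m)), (b : ZMod (p ^ n))), hfapp a b⟩
    · rw [Nat.card_prod, Nat.card_zmod, Nat.card_zmod, hcard, pow_add]
  have hinj : ∀ a b a' b' : ℕ, x ^ a * y ^ b = x ^ a' * y ^ b' →
      a ≡ a' [MOD p ^ m] ∧ b ≡ b' [MOD p ^ n] := by
    intro a b a' b' h
    have h2 := hbij.injective (a₁ := ((a : ZMod (p ^ m)), (b : ZMod (p ^ n))))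
      (a₂ := ((a' : ZMod (p ^ m)), (b' : ZMod (p ^ n)))) (by rw [hfapp, hfapp, h])
    rw [Prod.ext_iff] at h2
    exact ⟨(ZMod.natCast_eq_natCast_iff _ _ _).mp h2.1,
      (ZMod.natCast_eq_natCast_iff _ _ _).mp h2.2⟩
  -- center membership via commuting with generators
  have hcent : ∀ g : D, g ∈ Subgroup.center D ↔ (x * g = g * x ∧ y * g = g * y) := by
    intro g
    constructor
    · intro hg
      exact ⟨Subgroup.mem_center_iff.mp hg x, Subgroup.mem_center_iff.mp hg y⟩
    · rintro ⟨hxg, hyg⟩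
      rw [Subgroup.mem_center_iff]
      intro h
      have hmem : h ∈ Subgroup.closure ({x, y} : Set D) := by rw [hgen]; trivial
      refine Subgroup.closure_induction (p := fun h _ => h * g = g * h) ?_ (by simp) ?_ ?_ hmem
      · rintro z hz
        simp only [Set.mem_insert_iff, Set.mem_singleton_iff] at hz
        rcases hz with rfl | rfl
        · exact hxg
        · exact hyg
      · intro u v _ _ hu hv
        rw [mul_assoc, hv, ← mul_assoc, hu, mul_assoc]
      · intro u _ hu
        exact (Commute.inv_left (a := u) (b := g) hu).eq
  -- the central condition for x^a y^b
  have hcond : ∀ a b : ℕ, (x ^ a * y ^ b ∈ Subgroup.center D) ↔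
      (p ^ (m - l) ∣ a ∧ p ^ (m - l) ∣ b) := by
    intro a b
    rw [hcent]
    have lhs1 : x * (x ^ a * y ^ b) = x ^ (a + 1) * y ^ b := by
      rw [← mul_assoc, ← pow_succ']
    have rhs1 : (x ^ a * y ^ b) * x = x ^ (a + c ^ b) * y ^ b := by
      have hk := key b 1
      rw [pow_one, one_mul] at hk
      rw [mul_assoc, hk, ← mul_assoc, ← pow_add]
    have lhs2 : y * (x ^ a * y ^ b) = x ^ (a * c) * y ^ (b + 1) := by
      rw [← mul_assoc, hyxa, mul_assoc, ← pow_succ']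
    have rhs2 : (x ^ a * y ^ b) * y = x ^ a * y ^ (b + 1) := by
      rw [mul_assoc, ← pow_succ]
    have hcb1 : 1 ≤ c ^ b := Nat.one_le_pow _ _ (by omega)
    have e1 : (x * (x ^ a * y ^ b) = (x ^ a * y ^ b) * x) ↔ p ^ (m - l) ∣ b := by
      rw [lhs1, rhs1]
      constructor
      · intro h
        have h2 := (hinj _ _ _ _ h).1
        have h3 : 1 ≡ c ^ b [MOD p ^ m] := Nat.ModEq.add_left_cancel' a h2
        have h4 : p ^ m ∣ c ^ b - 1 := (Nat.modEq_iff_dvd' hcb1).mp h3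
        exact (aux_lte hp hodd hl hlm.le b).mp h4
      · intro h
        have h4 := (aux_lte hp hodd hl hlm.le b).mpr h
        have h3 : 1 ≡ c ^ b [MOD p ^ m] := (Nat.modEq_iff_dvd' hcb1).mpr h4
        have : x ^ (a + 1) = x ^ (a + c ^ b) := by
          rw [pow_eq_pow_iff_modEq, hx]
          exact Nat.ModEq.add_left a h3
        rw [this]
    have e2 : (y * (x ^ a * y ^ b) = (x ^ a * y ^ b) * y) ↔ p ^ (m - l) ∣ a := by
      rw [lhs2, rhs2]
      have hac : a * c = a + a * p ^ l := by rw [hcdef]; ring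
      have hsplit : p ^ m = p ^ (m - l) * p ^ l := by
        rw [← pow_add]
        congr 1
        omega
      constructor
      · intro h
        have h2 := (hinj _ _ _ _ h).1
        have h3 : a ≡ a + a * p ^ l [MOD p ^ m] := by rw [hac] at h2; exact h2.symm
        have h4 : p ^ m ∣ a * p ^ l := by
          have := (Nat.modEq_iff_dvd' (Nat.le_add_right _ _)).mp h3
          simpa using this
        rw [hsplit, Nat.mul_dvd_mul_iff_right hpl0] at h4
        exact h4
      · intro h
        have h4 : p ^ m ∣ a * p ^ l := by
          rw [hsplit]
          exact Nat.mul_dvd_mul_iff_right hpl0 |>.mpr h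
        have h3 : a ≡ a + a * p ^ l [MOD p ^ m] :=
          (Nat.modEq_iff_dvd' (Nat.le_add_right _ _)).mpr (by simpa using h4)
        have : x ^ (a * c) = x ^ a := by
          rw [pow_eq_pow_iff_modEq, hx, hac]
          exact h3.symm
        rw [this]
    rw [e1, e2, and_comm]
  -- conclusion
  constructor
  · apply le_antisymm
    · intro g hg
      obtain ⟨a, b, rfl⟩ := hform g
      obtain ⟨⟨a1, rfl⟩, ⟨b1, rfl⟩⟩ := (hcond a b).mp hg
      rw [pow_mul, pow_mul]
      exact Subgroup.mul_mem _
        (Subgroup.pow_mem _ (Subgroup.subset_closure (by simp)) a1)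
        (Subgroup.pow_mem _ (Subgroup.subset_closure (by simp)) b1)
    · rw [Subgroup.closure_le]
      rintro z hz
      simp only [Set.mem_insert_iff, Set.mem_singleton_iff] at hz
      rcases hz with rfl | rfl
      · have := (hcond (p ^ (m - l)) 0).mpr ⟨dvd_rfl, dvd_zero _⟩
        simpa using this
      · have := (hcond 0 (p ^ (m - l))).mpr ⟨dvd_zero _, dvd_rfl⟩
        simpa using this
  · -- cardinality
    set q := p ^ (m - l) with hqdef
    set e := n - (m - l) with hedef
    have hql : q * p ^ l = p ^ m := by rw [hqdef, ← pow_add]; congr 1; omega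
    have hqe : q * p ^ e = p ^ n := by rw [hqdef, hedef, ← pow_add]; congr 1; omega
    have hple0 : 0 < p ^ l := hpl0
    have hpe0 : 0 < p ^ e := Nat.pow_pos (by omega)
    haveI : NeZero (p ^ l) := ⟨hpl0.ne'⟩
    haveI : NeZero (p ^ e) := ⟨hpe0.ne'⟩
    set F : ZMod (p ^ l) × ZMod (p ^ e) → Subgroup.center D := fun z =>
      ⟨x ^ (q * z.1.val) * y ^ (q * z.2.val),
        (hcond _ _).mpr ⟨⟨_, rfl⟩, ⟨_, rfl⟩⟩⟩ with hF
    have hFbij : Function.Bijective F := by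
      constructor
      · rintro ⟨u1, u2⟩ ⟨v1, v2⟩ h
        have h' : x ^ (q * u1.val) * y ^ (q * u2.val) = x ^ (q * v1.val) * y ^ (q * v2.val) :=
          congrArg Subtype.val h
        obtain ⟨h1, h2⟩ := hinj _ _ _ _ h'
        rw [← hql] at h1
        rw [← hqe] at h2
        have h1' := Nat.ModEq.mul_left_cancel' hq0.ne' h1
        have h2' := Nat.ModEq.mul_left_cancel' hq0.ne' h2
        have e1 : u1 = v1 := ZMod.val_injective _ (h1'.eq_of_lt_of_lt u1.val_lt v1.val_lt)
        have e2 : u2 = v2 := ZMod.val_injective _ (h2'.eq_of_lt_of_lt u2.val_lt v2.val_lt)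
        rw [e1, e2]
      · rintro ⟨g, hg⟩
        obtain ⟨a, b, rfl⟩ := hform g
        obtain ⟨⟨a1, rfl⟩, ⟨b1, rfl⟩⟩ := (hcond a b).mp hg
        refine ⟨((a1 : ZMod (p ^ l)), (b1 : ZMod (p ^ e))), ?_⟩
        apply Subtype.ext
        simp only [hF, ZMod.val_natCast]
        have ex : x ^ (q * (a1 % p ^ l)) = x ^ (q * a1) := by
          rw [pow_eq_pow_iff_modEq, hx, ← hql]
          exact Nat.ModEq.mul_left' _ (Nat.mod_modEq a1 (p ^ l))
        have ey : y ^ (q * (b1 % p ^ e)) = y ^ (q * b1) := by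
          rw [pow_eq_pow_iff_modEq, hy, ← hqe]
          exact Nat.ModEq.mul_left' _ (Nat.mod_modEq b1 (p ^ e))
        rw [ex, ey]
    have hcardc : Nat.card (Subgroup.center D) = p ^ l * p ^ e := by
      rw [← Nat.card_eq_of_bijective F hFbij, Nat.card_prod, Nat.card_zmod, Nat.card_zmod]
    rw [hcardc, ← pow_add]
    congr 1
    omega
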